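/- Let C be an almost affine code of length n and dimension k on alphabet F, with associated matroid rank function r. For any codeword c̃ ∈ C and any X ⊆ {1,...,n}, the set C(X,c̃) = {c ∈ C : c agrees with c̃ on X} is an almost affine subcode of C and |C(X,c̃)| = |F|^{k - r(X)}. -/

import Mathlib

/-- The projection (puncturing) of a block code `C ⊆ F^n` to the coordinate set `X`. -/
def projC {F : Type*} [DecidableEq F] {n : ℕ} (C : Finset (Fin n → F)) (X : Finset (Fin n)) :
    Finset ({ i // i ∈ X } → F) :=
  C.image (fun c i => c i.1)

/-- `C ⊆ F^n` is an almost affine code of length `n` and dimension `k`: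
`|C| = |F|^k` and every projection has cardinality a power of `|F|`. -/
def IsAlmostAffineCode {F : Type*} [Fintype F] [DecidableEq F] (n k : ℕ)
    (C : Finset (Fin n → F)) : Prop :=
  C.card = Fintype.card F ^ k ∧
    ∀ X : Finset (Fin n), ∃ s : ℕ, (projC C X).card = Fintype.card F ^ s

/-- The `ct`-support of a word `c`. -/
def suppW {F : Type*} [DecidableEq F] {n : ℕ} (c ct : Fin n → F) : Finset (Fin n) :=
  Finset.univ.filter (fun i => c i ≠ ct i)

/-- `C(X, ct)`: the codewords of `C` agreeing with `ct` on `X`. -/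
def agreeOn {F : Type*} [DecidableEq F] {n : ℕ} (C : Finset (Fin n → F))
    (X : Finset (Fin n)) (ct : Fin n → F) : Finset (Fin n → F) :=
  C.filter (fun w => ∀ i ∈ X, w i = ct i)

/-- The `ct`-support of a code `D`. -/
def suppCode {F : Type*} [DecidableEq F] {n : ℕ} (D : Finset (Fin n → F)) (ct : Fin n → F) :
    Finset (Fin n) :=
  D.biUnion (fun w => suppW w ct)

section Aux

lemma sum_all_eq_of_le {α : Type*} {s : Finset α} {g : α → ℕ} {c : ℕ}
    (hle : ∀ x ∈ s, c ≤ g x) (hsum : ∑ x ∈ s, g x = s.card * c) :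
    ∀ x ∈ s, g x = c := by
  by_contra h
  push_neg at h
  obtain ⟨a, ha, hne⟩ := h
  have hlt : ∑ _x ∈ s, c < ∑ x ∈ s, g x :=
    Finset.sum_lt_sum hle ⟨a, ha, lt_of_le_of_ne (hle a ha) (Ne.symm hne)⟩
  rw [Finset.sum_const, smul_eq_mul] at hlt
  omega

lemma sum_all_eq_of_ge {α : Type*} {s : Finset α} {g : α → ℕ} {c : ℕ}
    (hle : ∀ x ∈ s, g x ≤ c) (hsum : ∑ x ∈ s, g x = s.card * c) :
    ∀ x ∈ s, g x = c := by
  by_contra h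
  push_neg at h
  obtain ⟨a, ha, hne⟩ := h
  have hlt : ∑ x ∈ s, g x < ∑ _x ∈ s, c :=
    Finset.sum_lt_sum hle ⟨a, ha, lt_of_le_of_ne (hle a ha) hne⟩
  rw [Finset.sum_const, smul_eq_mul] at hlt
  omega

variable {F : Type*} [Fintype F] [DecidableEq F] {n : ℕ}

lemma agreeOn_eq_filter (C : Finset (Fin n → F)) (X : Finset (Fin n)) (w : Fin n → F) :
    agreeOn C X w = C.filter (fun v => (fun i : {i // i ∈ X} => v i.1) = (fun i => w i.1)) := by
  unfold agreeOn
  apply Finset.filter_congr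
  intro v _
  simp [funext_iff, Subtype.forall]

lemma mem_agreeOn {C : Finset (Fin n → F)} {X : Finset (Fin n)} {ct u : Fin n → F} :
    u ∈ agreeOn C X ct ↔ u ∈ C ∧ ∀ i ∈ X, u i = ct i := Finset.mem_filter

lemma rank_le_dim (hF : 1 < Fintype.card F) {k : ℕ} (C : Finset (Fin n → F))
    (hCcard : C.card = Fintype.card F ^ k) (r : Finset (Fin n) → ℕ)
    (hr : ∀ X : Finset (Fin n), (projC C X).card = Fintype.card F ^ r X)
    (X : Finset (Fin n)) : r X ≤ k := by
  have h : (projC C X).card ≤ C.card := Finset.card_image_le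
  rw [hr X, hCcard] at h
  exact (Nat.pow_le_pow_iff_right hF).mp h

lemma rank_mono (hF : 1 < Fintype.card F) (C : Finset (Fin n → F))
    (r : Finset (Fin n) → ℕ)
    (hr : ∀ X : Finset (Fin n), (projC C X).card = Fintype.card F ^ r X)
    {X Y : Finset (Fin n)} (hXY : X ⊆ Y) : r X ≤ r Y := by
  have himg : projC C X = (projC C Y).image
      (fun f (j : {x // x ∈ X}) => f ⟨j.1, hXY j.2⟩) := by
    unfold projC
    rw [Finset.image_image]
    rfl
  have hc : (projC C X).card ≤ (projC C Y).card := by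
    rw [himg]; exact Finset.card_image_le
  rw [hr X, hr Y] at hc
  exact (Nat.pow_le_pow_iff_right hF).mp hc

lemma fiber_card (hF : 1 < Fintype.card F) {k : ℕ} (C : Finset (Fin n → F))
    (hCcard : C.card = Fintype.card F ^ k) (r : Finset (Fin n) → ℕ)
    (hr : ∀ X : Finset (Fin n), (projC C X).card = Fintype.card F ^ r X) :
    ∀ (m : ℕ) (X : Finset (Fin n)), Xᶜ.card = m →
      ∀ c ∈ C, (agreeOn C X c).card = Fintype.card F ^ (k - r X) := by
  set q := Fintype.card F with hqdef
  intro m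
  induction m with
  | zero =>
    intro X hX c hc
    have hXuniv : X = Finset.univ := by
      have := Finset.card_eq_zero.mp hX
      rwa [Finset.compl_eq_empty_iff] at this
    subst hXuniv
    have hinj : Set.InjOn (fun c (i : {i // i ∈ (Finset.univ : Finset (Fin n))}) => c i.1)
        (C : Set (Fin n → F)) := by
      intro a _ b _ h
      funext j
      exact congrFun h ⟨j, Finset.mem_univ j⟩
    have hcardim : (projC C Finset.univ).card = C.card := Finset.card_image_of_injOn hinj
    have hru : r Finset.univ = k := by
      rw [hr, hCcard] at hcardim
      exact Nat.pow_right_injective hF hcardim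
    have hsingle : agreeOn C Finset.univ c = {c} := by
      ext u
      simp only [agreeOn, Finset.mem_filter, Finset.mem_univ, Finset.mem_singleton, true_implies]
      constructor
      · rintro ⟨_, h⟩; exact funext h
      · rintro rfl; exact ⟨hc, fun _ => rfl⟩
    rw [hsingle, hru]
    simp
  | succ m ih =>
    intro X hX c hc
    have hq : 0 < q := by omega
    -- pick i ∉ X
    have hne : Xᶜ.Nonempty := Finset.card_pos.mp (by omega)
    obtain ⟨i, hi⟩ := hne
    have hiX : i ∉ X := Finset.mem_compl.mp hi
    set X' : Finset (Fin n) := insert i X with hX'def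
    have hX'c : X'ᶜ.card = m := by
      rw [hX'def, Finset.compl_insert, Finset.card_erase_of_mem hi, hX]
      omega
    have ih' := ih X' hX'c
    set Q : ℕ := q ^ (k - r X') with hQdef
    have hQpos : 0 < Q := pow_pos hq _
    -- each X-fiber has size (number of i-values) * Q
    have hfib : ∀ w ∈ C, (agreeOn C X w).card =
        ((agreeOn C X w).image (fun c => c i)).card * Q := by
      intro w hw
      rw [Finset.card_eq_sum_card_image (fun c => c i) (agreeOn C X w)]
      rw [Finset.sum_congr rfl (fun v hv => ?_), Finset.sum_const, smul_eq_mul]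
      obtain ⟨w', hw', hw'v⟩ := Finset.mem_image.mp hv
      have hw'C : w' ∈ C := Finset.mem_filter.mp hw' |>.1
      have hw'X : ∀ j ∈ X, w' j = w j := Finset.mem_filter.mp hw' |>.2
      have hfilt : Finset.filter (fun a => a i = v) (agreeOn C X w) = agreeOn C X' w' := by
        ext u
        rw [Finset.mem_filter, mem_agreeOn, mem_agreeOn, hX'def]
        constructor
        · rintro ⟨⟨huC, huX⟩, huv⟩
          refine ⟨huC, fun j hj => ?_⟩
          rcases Finset.mem_insert.mp hj with rfl | hj
          · rw [huv, hw'v]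
          · rw [huX j hj, hw'X j hj]
        · rintro ⟨huC, hu⟩
          refine ⟨⟨huC, fun j hj => ?_⟩, ?_⟩
          · rw [hu j (Finset.mem_insert_of_mem hj), hw'X j hj]
          · rw [hu i (Finset.mem_insert_self i X), hw'v]
      rw [hfilt]
      exact ih' w' hw'C
    -- global counting
    set f : (Fin n → F) → ({x // x ∈ X} → F) := fun c j => c j.1 with hfdef
    set g : ({x // x ∈ X} → F) → ℕ :=
      fun x => (C.filter (fun a => f a = x)).card with hgdef
    have hprojX : projC C X = C.image f := rfl
    have hagree_g : ∀ w ∈ C, g (f w) = (agreeOn C X w).card := by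
      intro w hw
      rw [agreeOn_eq_filter]
    -- g (f w) = mval * Q with 1 ≤ mval ≤ q
    have hgval : ∀ x ∈ C.image f, 1 ≤ g x / Q ∧ g x / Q ≤ q ∧ g x = (g x / Q) * Q := by
      intro x hx
      obtain ⟨w, hw, rfl⟩ := Finset.mem_image.mp hx
      have h1 := hagree_g w hw
      have h2 := hfib w hw
      set mval := ((agreeOn C X w).image (fun c => c i)).card with hmval
      have hgx : g (f w) = mval * Q := by rw [h1, h2]
      have hdiv : g (f w) / Q = mval := by rw [hgx, Nat.mul_div_cancel _ hQpos]
      have hm1 : 1 ≤ mval := by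
        rw [hmval]
        apply Finset.card_pos.mpr
        refine ⟨w i, Finset.mem_image.mpr ⟨w, ?_, rfl⟩⟩
        exact Finset.mem_filter.mpr ⟨hw, fun _ _ => rfl⟩
      have hmq : mval ≤ q := by
        rw [hmval, hqdef]
        exact (Finset.card_le_univ _).trans (le_of_eq (Finset.card_univ))
      exact ⟨by rw [hdiv]; exact hm1, by rw [hdiv]; exact hmq, by rw [hdiv, hgx]⟩
    have hglob : C.card = ∑ x ∈ C.image f, g x := Finset.card_eq_sum_card_image f C
    have hsumQ : (∑ x ∈ C.image f, g x / Q) * Q = q ^ k := by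
      rw [Finset.sum_mul]
      rw [Finset.sum_congr rfl (fun x hx => ((hgval x hx).2.2).symm)]
      rw [← hglob, hCcard]
    have hrX'le : r X' ≤ k := rank_le_dim hF C hCcard r hr X'
    have hS : ∑ x ∈ C.image f, g x / Q = q ^ r X' := by
      apply Nat.eq_of_mul_eq_mul_right hQpos
      rw [hsumQ, hQdef, ← pow_add]
      congr 1
      omega
    have ht : (C.image f).card = q ^ r X := by rw [← hprojX, hr]
    -- bounds on r X'
    have hlow : q ^ r X ≤ q ^ r X' := by
      rw [← hS, ← ht]
      calc (C.image f).card = ∑ _x ∈ C.image f, 1 := by simp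
        _ ≤ ∑ x ∈ C.image f, g x / Q :=
          Finset.sum_le_sum (fun x hx => (hgval x hx).1)
    have hhigh : q ^ r X' ≤ q ^ (r X + 1) := by
      rw [← hS]
      calc (∑ x ∈ C.image f, g x / Q) ≤ ∑ _x ∈ C.image f, q :=
            Finset.sum_le_sum (fun x hx => (hgval x hx).2.1)
        _ = q ^ r X * q := by rw [Finset.sum_const, smul_eq_mul, ht]
        _ = q ^ (r X + 1) := by rw [pow_succ]
    have hrlow : r X ≤ r X' := (Nat.pow_le_pow_iff_right hF).mp hlow
    have hrhigh : r X' ≤ r X + 1 := (Nat.pow_le_pow_iff_right hF).mp hhigh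
    have hfc : f c ∈ C.image f := Finset.mem_image.mpr ⟨c, hc, rfl⟩
    have hgc : g (f c) = (agreeOn C X c).card := hagree_g c hc
    rcases (by omega : r X' = r X ∨ r X' = r X + 1) with hcase | hcase
    · -- all m-values are 1
      have hall : ∀ x ∈ C.image f, g x / Q = 1 := by
        apply sum_all_eq_of_le (fun x hx => (hgval x hx).1)
        rw [hS, ht, hcase, mul_one]
      have := (hgval (f c) hfc).2.2
      rw [hall (f c) hfc, one_mul] at this
      rw [← hgc, this, hQdef, hcase]
    · -- all m-values are q
      have hall : ∀ x ∈ C.image f, g x / Q = q := by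
        apply sum_all_eq_of_ge (fun x hx => (hgval x hx).2.1)
        rw [hS, ht, hcase, pow_succ]
      have := (hgval (f c) hfc).2.2
      rw [hall (f c) hfc] at this
      rw [← hgc, this, hQdef, ← pow_succ']
      congr 1
      omega
end Aux

/-- for an almost affine code `C` with rank function `r`, a codeword `ct` and
`X ⊆ {1,…,n}`, the set `C(X, ct)` is an almost affine subcode of `C` of cardinality
`|F|^{k - r(X)}`. -/
theorem agreeOn_is_subcode_card
    {F : Type*} [Fintype F] [DecidableEq F] (hF : 1 < Fintype.card F)
    {n k : ℕ} (C : Finset (Fin n → F)) (hC : IsAlmostAffineCode n k C)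
    (r : Finset (Fin n) → ℕ)
    (hr : ∀ X : Finset (Fin n), (projC C X).card = Fintype.card F ^ r X)
    (ct : Fin n → F) (hct : ct ∈ C) (X : Finset (Fin n)) :
    agreeOn C X ct ⊆ C ∧ IsAlmostAffineCode n (k - r X) (agreeOn C X ct) ∧
      (agreeOn C X ct).card = Fintype.card F ^ (k - r X) := by
  obtain ⟨hCcard, _⟩ := hC
  set q := Fintype.card F with hqdef
  have hq : 0 < q := by omega
  have hfib := fiber_card hF C hCcard r hr
  have hcard : ∀ (Y : Finset (Fin n)), ∀ c ∈ C,
      (agreeOn C Y c).card = q ^ (k - r Y) := fun Y c hc => hfib Yᶜ.card Y rfl c hc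
  have hDcard : (agreeOn C X ct).card = q ^ (k - r X) := hcard X ct hct
  refine ⟨Finset.filter_subset _ _, ⟨hDcard, ?_⟩, hDcard⟩
  -- projections of D are powers of q
  intro Z
  set D := agreeOn C X ct with hDdef
  set fZ : (Fin n → F) → ({x // x ∈ Z} → F) := fun c j => c j.1 with hfZdef
  have hproj : projC D Z = D.image fZ := rfl
  refine ⟨(k - r X) - (k - r (X ∪ Z)), ?_⟩
  have hglob : D.card = ∑ z ∈ D.image fZ, (D.filter (fun a => fZ a = z)).card :=
    Finset.card_eq_sum_card_image fZ D
  have hterm : ∀ z ∈ D.image fZ,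
      (D.filter (fun a => fZ a = z)).card = q ^ (k - r (X ∪ Z)) := by
    intro z hz
    obtain ⟨w, hw, rfl⟩ := Finset.mem_image.mp hz
    have hwC : w ∈ C := Finset.mem_filter.mp hw |>.1
    have hwX : ∀ j ∈ X, w j = ct j := Finset.mem_filter.mp hw |>.2
    have hfZiff : ∀ u : Fin n → F, fZ u = fZ w ↔ ∀ j ∈ Z, u j = w j := by
      intro u
      rw [hfZdef]
      simp [funext_iff, Subtype.forall]
    have hfilt : D.filter (fun a => fZ a = fZ w) = agreeOn C (X ∪ Z) w := by
      ext u
      rw [Finset.mem_filter, hDdef, mem_agreeOn, mem_agreeOn, hfZiff]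
      constructor
      · rintro ⟨⟨huC, huX⟩, huZ⟩
        refine ⟨huC, fun j hj => ?_⟩
        rcases Finset.mem_union.mp hj with hj | hj
        · rw [huX j hj, hwX j hj]
        · exact huZ j hj
      · rintro ⟨huC, hu⟩
        exact ⟨⟨huC, fun j hj => by
            rw [hu j (Finset.mem_union_left _ hj), hwX j hj]⟩,
          fun j hj => hu j (Finset.mem_union_right _ hj)⟩
    rw [hfilt]
    exact hcard (X ∪ Z) w hwC
  have hsum : D.card = (D.image fZ).card * q ^ (k - r (X ∪ Z)) := by
    rw [hglob, Finset.sum_congr rfl hterm, Finset.sum_const, smul_eq_mul]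
  have hrle : r X ≤ r (X ∪ Z) := rank_mono hF C r hr Finset.subset_union_left
  have hrk : r (X ∪ Z) ≤ k := rank_le_dim hF C hCcard r hr (X ∪ Z)
  have hQpos : 0 < q ^ (k - r (X ∪ Z)) := pow_pos hq _
  apply Nat.eq_of_mul_eq_mul_right hQpos
  rw [hproj, ← hsum, hDcard, ← pow_add]
  congr 1
  omega
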